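/- Consider the linear program T^0: maximize ε subject to (λ^T C)_j = (λ^T C)_{j+1} for j = 1,...,n−1, λ_i ≥ ε for all i, and ε ≤ 1. Then X_E = X if and only if T^0 has a feasible solution with ε > 0. -/

import Mathlib

open Finset

def probSimplex (n : ℕ) : Set (Fin n → ℝ) := {x | (∑ j, x j) = 1 ∧ ∀ j, 0 ≤ x j}

def Efficient {k n : ℕ} (C : Fin k → Fin n → ℝ) (x : Fin n → ℝ) : Prop :=
  x ∈ probSimplex n ∧
    ¬ ∃ y ∈ probSimplex n, (∀ i, ∑ j, C i j * x j ≤ ∑ j, C i j * y j) ∧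
      ∃ i, ∑ j, C i j * x j < ∑ j, C i j * y j

theorem stmt13 (n k : ℕ) (hn : 2 ≤ n) (hk : 2 ≤ k) (C : Fin k → Fin n → ℝ)
    (hES : ∀ x ∈ probSimplex n, Efficient C x ↔
      ∃ l : Fin k → ℝ, (∀ i, 0 < l i) ∧ ∀ y ∈ probSimplex n,
        ∑ j, (∑ i, l i * C i j) * y j ≤ ∑ j, (∑ i, l i * C i j) * x j) :
    (∀ x ∈ probSimplex n, Efficient C x) ↔
      ∃ ε : ℝ, ∃ l : Fin k → ℝ, 0 < ε ∧ ε ≤ 1 ∧ (∀ i, ε ≤ l i) ∧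
        (∀ j : Fin n, (h : (j : ℕ) + 1 < n) →
          (∑ i, l i * C i j) = ∑ i, l i * C i ⟨(j : ℕ) + 1, h⟩) := by
  have hn0 : 0 < n := by omega
  have hk0 : 0 < k := by omega
  haveI : NeZero n := ⟨by omega⟩
  haveI : NeZero k := ⟨by omega⟩
  constructor
  · intro h
    -- centroid
    have hc : (fun _ : Fin n => (1 : ℝ) / n) ∈ probSimplex n := by
      constructor
      · simp [Finset.sum_const, Finset.card_univ]
      · intro j; positivity
    obtain ⟨l, hl, hmax⟩ := (hES _ hc).mp (h _ hc)
    set f : Fin n → ℝ := fun j => ∑ i, l i * C i j with hf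
    have hunit : ∀ j : Fin n, (fun j' => if j' = j then (1:ℝ) else 0) ∈ probSimplex n := by
      intro j
      constructor
      · simp
      · intro j'; dsimp; split <;> norm_num
    have havg : ∀ j, f j ≤ (∑ j', f j') / n := by
      intro j
      have := hmax _ (hunit j)
      simp [Finset.mul_sum, mul_ite, Finset.sum_ite_eq', mul_one_div,
        Finset.sum_div] at this
      rw [Finset.sum_div]; simp only [div_eq_mul_inv]; exact this
    have heq : ∀ j, f j = (∑ j', f j') / n := by
      intro j
      by_contra hne
      have hlt : f j < (∑ j', f j') / n := lt_of_le_of_ne (havg j) hne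
      have : (∑ j', f j') < ∑ j' : Fin n, (∑ j'', f j'') / n :=
        Finset.sum_lt_sum (fun j' _ => havg j') ⟨j, Finset.mem_univ j, hlt⟩
      rw [Finset.sum_const, Finset.card_univ, Fintype.card_fin, nsmul_eq_mul] at this
      rw [mul_div_cancel₀] at this
      · exact lt_irrefl _ this
      · exact_mod_cast hn0.ne'
    haveI : Nonempty (Fin k) := ⟨⟨0, hk0⟩⟩
    refine ⟨min 1 (Finset.univ.inf' univ_nonempty l), l, ?_, min_le_left _ _, ?_, ?_⟩
    · refine lt_min one_pos ?_
      rw [Finset.lt_inf'_iff]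
      exact fun i _ => hl i
    · intro i
      exact (min_le_right _ _).trans (Finset.inf'_le _ (Finset.mem_univ i))
    · intro j hj
      have h1 := heq j
      have h2 := heq ⟨(j : ℕ) + 1, hj⟩
      simpa [hf] using h1.trans h2.symm
  · rintro ⟨ε, l, hε, -, hl, hconst⟩ x hx
    refine (hES x hx).mpr ⟨l, fun i => lt_of_lt_of_le hε (hl i), ?_⟩
    set f : Fin n → ℝ := fun j => ∑ i, l i * C i j with hf
    have hconst' : ∀ j : Fin n, f j = f ⟨0, hn0⟩ := by
      intro ⟨m, hm⟩
      induction m with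
      | zero => rfl
      | succ m ih =>
        have hm' : m < n := by omega
        have := hconst ⟨m, hm'⟩ hm
        exact (this.symm.trans (ih hm'))
    intro y hy
    have key : ∀ z : Fin n → ℝ, z ∈ probSimplex n →
        (∑ j, f j * z j) = f ⟨0, hn0⟩ := by
      intro z hz
      calc (∑ j, f j * z j) = ∑ j, f ⟨0, hn0⟩ * z j := by
            refine Finset.sum_congr rfl fun j _ => by rw [hconst' j]
        _ = f ⟨0, hn0⟩ * ∑ j, z j := by rw [Finset.mul_sum]
        _ = f ⟨0, hn0⟩ := by rw [hz.1, mul_one]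
    show (∑ j, f j * y j) ≤ ∑ j, f j * x j
    rw [key y hy, key x hx]
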